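/- arXiv:0802.0165 — 2 statements merged into one kernel-verified Lean document; each statement's English description precedes it below -/
import Mathlib

section
/- For pairwise distinct points A, B, C on an elliptic curve E, the following product formula holds as an identity of functions on E: u_{A,B}·u_{A,C} = x_A + Γ(A,B,C)·u_{A,C} + Γ(A,C,B)·u_{A,B} + a₂ + x_A(B) + x_A(C). -/
noncomputable section
namespace EllipticPeriods

variable {F : Type*} [Field F]

/-- x-coordinate of an affine point, with junk value 0 at the point at infinity. -/
def xc {W : WeierstrassCurve.Affine F} : W.Point → F
  | .zero => 0
  | @WeierstrassCurve.Affine.Point.some _ _ _ x _ _ => x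

/-- y-coordinate of an affine point, with junk value 0 at the point at infinity. -/
def yc {W : WeierstrassCurve.Affine F} : W.Point → F
  | .zero => 0
  | @WeierstrassCurve.Affine.Point.some _ _ _ _ y _ => y

open Classical in
/-- The function `u_{A,B} = (y_A - y(A-B))/(x_A - x(A-B))`, evaluated at `P`: this is the
slope of the line (secant, or tangent in the degenerate case) through the points
`P - A` and `A - B` of the curve. -/
def uf (W : WeierstrassCurve.Affine F) (A B P : W.Point) : F :=
  W.slope (xc (P - A)) (xc (A - B)) (yc (P - A)) (yc (A - B))

/-- `Γ(A,B,C) = u_{A,B}(C)`. -/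
def Gam (W : WeierstrassCurve.Affine F) (A B C : W.Point) : F := uf W A B C

set_option maxHeartbeats 2000000 in
set_option maxRecDepth 100000 in
open Classical in
open WeierstrassCurve.Affine in
lemma key (W : WeierstrassCurve.Affine F) {x₁ y₁ x₂ y₂ x₃ y₃ : F}
    (h₁ : W.Equation x₁ y₁) (h₂ : W.Equation x₂ y₂) (h₃ : W.Equation x₃ y₃)
    (h12 : ¬(x₁ = x₂ ∧ y₁ = W.negY x₂ y₂))
    (h13 : ¬(x₁ = x₃ ∧ y₁ = W.negY x₃ y₃))
    (h23 : ¬(x₂ = x₃ ∧ y₂ = y₃)) :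
    W.slope x₁ x₂ y₁ y₂ * W.slope x₁ x₃ y₁ y₃ =
      x₁ + W.slope x₃ x₂ (W.negY x₃ y₃) y₂ * W.slope x₁ x₃ y₁ y₃ +
        W.slope x₂ x₃ (W.negY x₂ y₂) y₃ * W.slope x₁ x₂ y₁ y₂ + W.a₂ + x₂ + x₃ := by
  have e₁ := (W.equation_iff x₁ y₁).mp h₁
  have e₂ := (W.equation_iff x₂ y₂).mp h₂
  have e₃ := (W.equation_iff x₃ y₃).mp h₃
  by_cases hx12 : x₁ = x₂
  · -- case Q = D (tangent u)
    have hy12 : y₁ ≠ W.negY x₂ y₂ := fun h => h12 ⟨hx12, h⟩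
    have hyy : y₁ = y₂ := Y_eq_of_Y_ne h₁ h₂ hx12 hy12
    subst hyy
    subst hx12
    have hx13 : x₁ ≠ x₃ := by
      intro h
      rcases Y_eq_of_X_eq h₁ h₃ h with hv | hv
      · exact h23 ⟨h, hv⟩
      · exact h13 ⟨h, hv⟩
    have hd : y₁ - W.negY x₁ y₁ ≠ 0 := sub_ne_zero.mpr hy12
    rw [slope_of_Y_ne rfl hy12, slope_of_X_ne hx13, slope_of_X_ne (Ne.symm hx13),
      slope_of_X_ne hx13]
    have hs : x₁ - x₃ ≠ 0 := sub_ne_zero.mpr hx13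
    have hs' : x₃ - x₁ ≠ 0 := sub_ne_zero.mpr (Ne.symm hx13)
    simp only [WeierstrassCurve.Affine.negY] at *
    have hh : y₁ - (-y₁ - x₁ * W.a₁ - W.a₃) ≠ 0 := fun h => hd (by linear_combination h)
    field_simp
    linear_combination (0 + W.a₃ + 2*y₁ + x₁*W.a₁) * e₁ + 0 * e₂ + (0 - W.a₃ - 2*y₁ - x₁*W.a₁) * e₃
  · by_cases hx13 : x₁ = x₃
    · -- case Q = E (tangent v)
      have hy13 : y₁ ≠ W.negY x₃ y₃ := fun h => h13 ⟨hx13, h⟩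
      have hyy : y₁ = y₃ := Y_eq_of_Y_ne h₁ h₃ hx13 hy13
      subst hyy
      subst hx13
      have hd : y₁ - W.negY x₁ y₁ ≠ 0 := sub_ne_zero.mpr hy13
      rw [slope_of_X_ne hx12, slope_of_Y_ne rfl hy13, slope_of_X_ne hx12,
        slope_of_X_ne (Ne.symm hx12)]
      have hs : x₁ - x₂ ≠ 0 := sub_ne_zero.mpr hx12
      have hs' : x₂ - x₁ ≠ 0 := sub_ne_zero.mpr (Ne.symm hx12)
      simp only [WeierstrassCurve.Affine.negY] at *
      have hh : y₁ - (-y₁ - x₁ * W.a₁ - W.a₃) ≠ 0 := fun h => hd (by linear_combination h)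
      field_simp
      linear_combination (0 + W.a₃ + 2*y₁ + x₁*W.a₁) * e₁ + (0 - W.a₃ - 2*y₁ - x₁*W.a₁) * e₂ + 0 * e₃
    · by_cases hx23 : x₂ = x₃
      · -- case E = -D (tangent γ, δ)
        subst hx23
        have hyne : y₂ ≠ y₃ := fun h => h23 ⟨rfl, h⟩
        have hy23 : y₃ = W.negY x₂ y₂ :=
          ((Y_eq_of_X_eq h₃ h₂ rfl).resolve_left (Ne.symm hyne))
        subst hy23
        rw [slope_of_X_ne hx12, slope_of_X_ne hx12,
          slope_of_Y_ne rfl (by rw [W.negY_negY]; exact hyne),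
          slope_of_Y_ne rfl (by rw [W.negY_negY]; exact Ne.symm hyne)]
        rw [W.negY_negY]
        have hs : x₁ - x₂ ≠ 0 := sub_ne_zero.mpr hx12
        have hd1 : y₂ - W.negY x₂ y₂ ≠ 0 := sub_ne_zero.mpr (fun h => hyne h)
        have hd2 : W.negY x₂ y₂ - y₂ ≠ 0 := sub_ne_zero.mpr (fun h => hyne h.symm)
        simp only [WeierstrassCurve.Affine.negY] at *
        have hh : y₂ - (-y₂ - x₂ * W.a₁ - W.a₃) ≠ 0 := fun h => hd1 (by linear_combination h)
        have hh' : -y₂ - x₂ * W.a₁ - W.a₃ - y₂ ≠ 0 := fun h => hd2 (by linear_combination h)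
        field_simp
        linear_combination (0 - W.a₃^2 - 4*y₂*W.a₃ - 4*y₂^2 - 2*x₂*W.a₁*W.a₃ - 4*x₂*y₂*W.a₁ - x₂^2*W.a₁^2) * e₁ + (0 + W.a₃^2 + 4*y₂*W.a₃ + 4*y₂^2 + 2*x₂*W.a₁*W.a₃ + 4*x₂*y₂*W.a₁ + x₂^2*W.a₁^2) * e₂ + 0 * e₃
      · -- generic case
        rw [slope_of_X_ne hx12, slope_of_X_ne hx13, slope_of_X_ne (Ne.symm hx23),
          slope_of_X_ne hx23]
        have hs12 : x₁ - x₂ ≠ 0 := sub_ne_zero.mpr hx12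
        have hs13 : x₁ - x₃ ≠ 0 := sub_ne_zero.mpr hx13
        have hs23 : x₂ - x₃ ≠ 0 := sub_ne_zero.mpr hx23
        have hs32 : x₃ - x₂ ≠ 0 := sub_ne_zero.mpr (Ne.symm hx23)
        simp only [WeierstrassCurve.Affine.negY] at *
        field_simp
        linear_combination (0 - x₃^2 + 2*x₂*x₃ - x₂^2) * e₁ + (0 + x₃^2 - x₂*x₃ - x₁*x₃ + x₁*x₂) * e₂ + (0 - x₂*x₃ + x₂^2 + x₁*x₃ - x₁*x₂) * e₃

lemma xc_some {W : WeierstrassCurve.Affine F} {x y : F} (h : W.Nonsingular x y) :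
    xc (WeierstrassCurve.Affine.Point.some _ _ h) = x := rfl

lemma yc_some {W : WeierstrassCurve.Affine F} {x y : F} (h : W.Nonsingular x y) :
    yc (WeierstrassCurve.Affine.Point.some _ _ h) = y := rfl

open Classical in
open WeierstrassCurve.Affine in
theorem u_product_aux {F : Type*} [Field F] (W : WeierstrassCurve.Affine F)
    (A B C : W.Point) (hAB : A ≠ B) (hBC : B ≠ C) (hAC : A ≠ C)
    (P : W.Point) (hPA : P ≠ A) (hPB : P ≠ B) (hPC : P ≠ C) :
    uf W A B P * uf W A C P =
      xc (P - A) + Gam W A B C * uf W A C P + Gam W A C B * uf W A B P +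
        W.a₂ + xc (B - A) + xc (C - A) := by
  have hQ : P - A ≠ 0 := sub_ne_zero.mpr hPA
  have hD : A - B ≠ 0 := sub_ne_zero.mpr hAB
  have hE : A - C ≠ 0 := sub_ne_zero.mpr hAC
  have hBA : B - A = -(A - B) := (neg_sub A B).symm
  have hCA : C - A = -(A - C) := (neg_sub A C).symm
  rcases hq : P - A with _ | @⟨x₁, y₁, n₁⟩
  · exact absurd hq hQ
  rcases hd : A - B with _ | @⟨x₂, y₂, n₂⟩
  · exact absurd hd hD
  rcases he : A - C with _ | @⟨x₃, y₃, n₃⟩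
  · exact absurd he hE
  have h12 : ¬(x₁ = x₂ ∧ y₁ = W.negY x₂ y₂) := by
    rintro ⟨rfl, rfl⟩
    apply hPB
    have : P - A = B - A := by rw [hq, hBA, hd, WeierstrassCurve.Affine.Point.neg_some]
    exact sub_left_inj.mp this
  have h13 : ¬(x₁ = x₃ ∧ y₁ = W.negY x₃ y₃) := by
    rintro ⟨rfl, rfl⟩
    apply hPC
    have : P - A = C - A := by rw [hq, hCA, he, WeierstrassCurve.Affine.Point.neg_some]
    exact sub_left_inj.mp this
  have h23 : ¬(x₂ = x₃ ∧ y₂ = y₃) := by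
    rintro ⟨rfl, rfl⟩
    apply hBC
    have : A - B = A - C := by rw [hd, he]
    exact sub_right_inj.mp this
  have goal := key W n₁.1 n₂.1 n₃.1 h12 h13 h23
  simp only [uf, Gam, hq, hd, he, hBA, hCA, WeierstrassCurve.Affine.Point.neg_some,
    xc_some, yc_some]
  exact goal


open Classical in
/-- the product formula
`u_{A,B}·u_{A,C} = x_A + Γ(A,B,C)·u_{A,C} + Γ(A,C,B)·u_{A,B} + a₂ + x_A(B) + x_A(C)`
as an identity of functions on `E` (pointwise away from the poles `A, B, C`). -/
theorem u_product {F : Type*} [Field F] (W : WeierstrassCurve.Affine F)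
    (A B C : W.Point) (hAB : A ≠ B) (hBC : B ≠ C) (hAC : A ≠ C)
    (P : W.Point) (hPA : P ≠ A) (hPB : P ≠ B) (hPC : P ≠ C) :
    uf W A B P * uf W A C P =
      xc (P - A) + Gam W A B C * uf W A C P + Gam W A C B * uf W A B P +
        W.a₂ + xc (B - A) + xc (C - A) :=
  u_product_aux W A B C hAB hBC hAC P hPA hPB hPC

end EllipticPeriods
end
end

section
/- For k, l distinct and nonzero in ℤ/dℤ, the constant Γ_{k,l} = Γ(O, kt, lt) satisfies the twelve symmetry relations: Γ_{k,l} = Γ_{-l,-k} = Γ_{k,k-l} = Γ_{l-k,-k} = Γ_{l-k,l} = Γ_{-l,k-l}, and Γ_{l,k} = Γ_{-k,-l} = Γ_{k-l,k} = Γ_{-k,l-k} = Γ_{l,l-k} = Γ_{k-l,-l}, together with Γ_{k,l} = -Γ_{l,k} - a₁ (all indices taken mod d, and only for those index pairs where both indices are distinct and nonzero). -/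
noncomputable section
namespace EllipticPeriods

variable {F : Type*} [Field F]

open WeierstrassCurve.Affine

open Classical

variable {W : WeierstrassCurve.Affine F}

/-- Slope of the (possibly degenerate) line through two affine points. -/
def sg (W : WeierstrassCurve.Affine F) (P Q : W.Point) : F :=
  W.slope (xc P) (xc Q) (yc P) (yc Q)

lemma some_congr' {x₁ y₁ x₂ y₂ : F} (hx : x₁ = x₂) (hy : y₁ = y₂) (h : W.Nonsingular x₁ y₁)
    (h' : W.Nonsingular x₂ y₂) : Point.some _ _ h = Point.some _ _ h' := by
  subst hx; subst hy; rfl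

lemma slope_comm' {x₁ y₁ x₂ y₂ : F} (h₁ : W.Nonsingular x₁ y₁) (h₂ : W.Nonsingular x₂ y₂) :
    W.slope x₁ x₂ y₁ y₂ = W.slope x₂ x₁ y₂ y₁ := by
  by_cases hx : x₁ = x₂
  · by_cases hy : y₁ = W.negY x₂ y₂
    · rw [slope_of_Y_eq hx hy, slope_of_Y_eq hx.symm (by rw [hy, hx, negY_negY])]
    · have hy' := Y_eq_of_Y_ne h₁.1 h₂.1 hx hy
      subst hx; subst hy'; rfl
  · rw [slope_of_X_ne hx, slope_of_X_ne (Ne.symm hx),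
      div_eq_div_iff (sub_ne_zero.mpr hx) (sub_ne_zero.mpr (Ne.symm hx))]
    ring

lemma slope_neg' {x₁ y₁ x₂ y₂ : F} (h₁ : W.Nonsingular x₁ y₁) (h₂ : W.Nonsingular x₂ y₂)
    (hne : ¬(x₁ = x₂ ∧ y₁ = W.negY x₂ y₂)) :
    W.slope x₁ x₂ (W.negY x₁ y₁) (W.negY x₂ y₂) = -W.slope x₁ x₂ y₁ y₂ - W.a₁ := by
  by_cases hx : x₁ = x₂
  · have hy : y₁ ≠ W.negY x₂ y₂ := fun h => hne ⟨hx, h⟩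
    have hy12 := Y_eq_of_Y_ne h₁.1 h₂.1 hx hy
    subst hx; subst hy12
    have hy' : W.negY x₁ y₁ ≠ W.negY x₁ (W.negY x₁ y₁) := by
      rw [negY_negY]; exact fun h => hy h.symm
    rw [slope_of_Y_ne rfl hy', slope_of_Y_ne rfl hy, negY_negY]
    have d1 : W.negY x₁ y₁ - y₁ ≠ 0 := sub_ne_zero.mpr (fun h => hy h.symm)
    have d2 : y₁ - W.negY x₁ y₁ ≠ 0 := sub_ne_zero.mpr hy
    field_simp
    simp only [negY]
    ring
  · rw [slope_of_X_ne hx, slope_of_X_ne hx]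
    have hd := sub_ne_zero.mpr hx
    field_simp [negY]
    simp only [negY]
    ring

lemma slope_third' {x₁ y₁ x₂ y₂ : F} (h₁ : W.Nonsingular x₁ y₁) (h₂ : W.Nonsingular x₂ y₂)
    (hne : ¬(x₁ = x₂ ∧ y₁ = W.negY x₂ y₂)) :
    W.slope x₁ (W.addX x₁ x₂ (W.slope x₁ x₂ y₁ y₂)) y₁
      (W.negAddY x₁ x₂ y₁ (W.slope x₁ x₂ y₁ y₂)) = W.slope x₁ x₂ y₁ y₂ := by
  set L := W.slope x₁ x₂ y₁ y₂ with hLdef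
  have hxy : x₁ = x₂ → y₁ ≠ W.negY x₂ y₂ := fun hx hy => hne ⟨hx, hy⟩
  by_cases hx3 : x₁ = W.addX x₁ x₂ L
  · have hy3 : W.negAddY x₁ x₂ y₁ L = y₁ := by rw [negAddY, ← hx3]; ring
    rw [hy3, ← hx3]
    by_cases h2t : y₁ = W.negY x₁ y₁
    · exfalso
      have hadd : Point.some _ _ h₁ + Point.some _ _ h₂ = Point.some _ _ (nonsingular_add h₁ h₂ hne) :=
        Point.add_some hne
      have hyadd : W.addY x₁ x₂ y₁ L = y₁ := by
        rw [addY, hy3, ← hx3, ← h2t]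
      have heq : Point.some _ _ (nonsingular_add h₁ h₂ hne) = Point.some _ _ h₁ :=
        some_congr' hx3.symm hyadd _ h₁
      rw [heq] at hadd
      have hQ : Point.some _ _ h₂ = 0 := add_eq_left.mp hadd
      exact Point.some_ne_zero h₂ hQ
    · rw [slope_of_Y_ne rfl h2t]
      by_cases hx12 : x₁ = x₂
      · have hy := hxy hx12
        have h12 := Y_eq_of_Y_ne h₁.1 h₂.1 hx12 hy
        rw [hLdef, slope_of_Y_ne hx12 hy]
      · have hd : x₁ - x₂ ≠ 0 := sub_ne_zero.mpr hx12
        have hLmul : L * (x₁ - x₂) = y₁ - y₂ := by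
          rw [hLdef, slope_of_X_ne hx12]; field_simp
        have e₁ := (W.equation_iff x₁ y₁).mp h₁.1
        have e₂ := (W.equation_iff x₂ y₂).mp h₂.1
        have hH : L ^ 2 + W.a₁ * L - W.a₂ - x₁ - x₂ = x₁ := by
          rw [addX] at hx3; exact hx3.symm
        rw [div_eq_iff (sub_ne_zero.mpr h2t)]
        apply mul_right_cancel₀ hd
        simp only [negY]
        linear_combination -(e₁ - e₂) - (y₁ + y₂ + W.a₁*x₁ + W.a₃ - (x₁-x₂)*(L+W.a₁)) * hLmul -
          (x₁-x₂)^2 * hH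
  · rw [slope_of_X_ne hx3, div_eq_iff (sub_ne_zero.mpr hx3), negAddY]
    ring

lemma ne_neg_some' {x₁ y₁ x₂ y₂ : F} {h₁ : W.Nonsingular x₁ y₁} {h₂ : W.Nonsingular x₂ y₂}
    (hPQ : Point.some _ _ h₁ ≠ -Point.some _ _ h₂) : ¬(x₁ = x₂ ∧ y₁ = W.negY x₂ y₂) := by
  rintro ⟨hx, hy⟩
  exact hPQ (by rw [Point.neg_some]; exact some_congr' hx hy _ _)

lemma sg_comm (P Q : W.Point) (hP : P ≠ 0) (hQ : Q ≠ 0) : sg W P Q = sg W Q P := by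
  rcases P with _ | @⟨x₁, y₁, h₁⟩
  · exact absurd Point.zero_def hP
  rcases Q with _ | @⟨x₂, y₂, h₂⟩
  · exact absurd Point.zero_def hQ
  simp only [sg, xc, yc]
  exact slope_comm' h₁ h₂

lemma sg_neg (P Q : W.Point) (hP : P ≠ 0) (hQ : Q ≠ 0) (hPQ : P ≠ -Q) :
    sg W (-P) (-Q) = -sg W P Q - W.a₁ := by
  rcases P with _ | @⟨x₁, y₁, h₁⟩
  · exact absurd Point.zero_def hP
  rcases Q with _ | @⟨x₂, y₂, h₂⟩
  · exact absurd Point.zero_def hQ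
  rw [Point.neg_some, Point.neg_some]
  simp only [sg, xc, yc]
  exact slope_neg' h₁ h₂ (ne_neg_some' hPQ)

lemma sg_third (P Q : W.Point) (hP : P ≠ 0) (hQ : Q ≠ 0) (hPQ : P ≠ -Q) :
    sg W P (-(P + Q)) = sg W P Q := by
  rcases P with _ | @⟨x₁, y₁, h₁⟩
  · exact absurd Point.zero_def hP
  rcases Q with _ | @⟨x₂, y₂, h₂⟩
  · exact absurd Point.zero_def hQ
  have hne := ne_neg_some' hPQ
  have hxy : x₁ = x₂ → y₁ ≠ W.negY x₂ y₂ := fun hx hy => hne ⟨hx, hy⟩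
  rw [Point.add_some hne, Point.neg_some]
  simp only [sg, xc, yc]
  have hyy : W.negY (W.addX x₁ x₂ (W.slope x₁ x₂ y₁ y₂)) (W.addY x₁ x₂ y₁ (W.slope x₁ x₂ y₁ y₂))
      = W.negAddY x₁ x₂ y₁ (W.slope x₁ x₂ y₁ y₂) := by
    rw [addY, negY_negY]
  rw [hyy]
  exact slope_third' h₁ h₂ hne

open Classical in
/-- the twelve symmetry relations for `Γ_{k,l} = Γ(O, kt, lt)`,
for `k, l` distinct and nonzero in `ℤ/dℤ` (all occurring index pairs are then
automatically distinct and nonzero), together with `Γ_{k,l} = -Γ_{l,k} - a₁`. -/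
theorem Gamma_kl_symmetries {K : Type*} [Field K] [Fintype K]
    (W : WeierstrassCurve.Affine K) (d : ℕ) (hd : 2 ≤ d)
    (t : W.Point) (ht : addOrderOf t = d)
    (G : ZMod d → ZMod d → K)
    (hG : ∀ k l : ZMod d, G k l = Gam W 0 (k.val • t) (l.val • t)) :
    ∀ k l : ZMod d, k ≠ 0 → l ≠ 0 → k ≠ l →
      (G k l = G (-l) (-k) ∧ G k l = G k (k - l) ∧ G k l = G (l - k) (-k) ∧
        G k l = G (l - k) l ∧ G k l = G (-l) (k - l)) ∧
      (G l k = G (-k) (-l) ∧ G l k = G (k - l) k ∧ G l k = G (-k) (l - k) ∧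
        G l k = G l (l - k) ∧ G l k = G (k - l) (-l)) ∧
      G k l = -G l k - W.a₁ := by
  haveI : NeZero d := ⟨by omega⟩
  have htd : (zmultiplesHom W.Point t) (d : ℤ) = 0 := by
    have h0 : d • t = 0 := by rw [← ht]; exact addOrderOf_nsmul_eq_zero t
    simpa [zmultiplesHom_apply, natCast_zsmul] using h0
  set φ : ZMod d →+ W.Point := ZMod.lift d ⟨zmultiplesHom W.Point t, htd⟩ with hφdef
  have hφ : ∀ a : ZMod d, φ a = a.val • t := by
    intro a
    conv_lhs => rw [← ZMod.natCast_rightInverse a]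
    rw [show ((a.val : ℕ) : ZMod d) = ((a.val : ℤ) : ZMod d) by push_cast; rfl,
      hφdef, ZMod.lift_coe]
    rw [zmultiplesHom_apply, natCast_zsmul]
  have hφ0 : ∀ a : ZMod d, a ≠ 0 → φ a ≠ 0 := by
    intro a ha h0
    rw [hφ] at h0
    have hdvd := addOrderOf_dvd_of_nsmul_eq_zero h0
    rw [ht] at hdvd
    have h1 : a.val < d := ZMod.val_lt a
    have h2 : a.val ≠ 0 := fun h => ha ((ZMod.val_eq_zero a).mp h)
    exact absurd (Nat.le_of_dvd (Nat.pos_of_ne_zero h2) hdvd) (by omega)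
  have hG' : ∀ a b : ZMod d, G a b = sg W (φ b) (-(φ a)) := by
    intro a b
    rw [hG, ← hφ a, ← hφ b]
    simp only [Gam, uf, sg, sub_zero, zero_sub]
  have main : ∀ k l : ZMod d, k ≠ 0 → l ≠ 0 → k ≠ l →
      G k l = G (-l) (-k) ∧ G k l = G k (k - l) ∧ G k l = G (l - k) (-k) ∧
        G k l = G (l - k) l ∧ G k l = G (-l) (k - l) := by
    intro k l hk hl hkl
    have hP : φ k ≠ 0 := hφ0 k hk
    have hQ : φ l ≠ 0 := hφ0 l hl
    have hNP : -(φ k) ≠ 0 := neg_ne_zero.mpr hP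
    have hPQ : φ k - φ l ≠ 0 := by
      rw [← map_sub]; exact hφ0 (k - l) (sub_ne_zero.mpr hkl)
    have hQneP : φ l ≠ -(-(φ k)) := by
      rw [neg_neg]
      exact fun h => hPQ (by rw [h, sub_self])
    have T1 : sg W (φ l) (φ k - φ l) = sg W (φ l) (-(φ k)) := by
      have he : -(φ l + -(φ k)) = φ k - φ l := by abel
      rw [← he]; exact sg_third (φ l) (-(φ k)) hQ hNP hQneP
    have T2 : sg W (-(φ k)) (φ k - φ l) = sg W (-(φ k)) (φ l) := by
      have hne : -(φ k) ≠ -(φ l) := fun h => hQneP (by rw [neg_neg]; exact (neg_inj.mp h).symm)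
      have he : -(-(φ k) + φ l) = φ k - φ l := by abel
      rw [← he]; exact sg_third (-(φ k)) (φ l) hNP hQ hne
    refine ⟨?_, ?_, ?_, ?_, ?_⟩
    · rw [hG' k l, hG' (-l) (-k), map_neg, map_neg, neg_neg,
        sg_comm (-(φ k)) (φ l) hNP hQ]
    · rw [hG' k l, hG' k (k - l), map_sub,
        sg_comm (φ k - φ l) (-(φ k)) hPQ hNP, T2, sg_comm (-(φ k)) (φ l) hNP hQ]
    · rw [hG' k l, hG' (l - k) (-k), map_neg, map_sub, neg_sub, T2,
        sg_comm (-(φ k)) (φ l) hNP hQ]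
    · rw [hG' k l, hG' (l - k) l, map_sub, neg_sub, T1]
    · rw [hG' k l, hG' (-l) (k - l), map_sub, map_neg, neg_neg,
        sg_comm (φ k - φ l) (φ l) hPQ hQ, T1]
  intro k l hk hl hkl
  refine ⟨main k l hk hl hkl, ?_, ?_⟩
  · obtain ⟨a, b, c, e, f⟩ := main l k hl hk (Ne.symm hkl)
    exact ⟨a, e, f, b, c⟩
  · have hP : φ k ≠ 0 := hφ0 k hk
    have hQ : φ l ≠ 0 := hφ0 l hl
    have hNP : -(φ k) ≠ 0 := neg_ne_zero.mpr hP
    have hPQ : φ k - φ l ≠ 0 := by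
      rw [← map_sub]; exact hφ0 (k - l) (sub_ne_zero.mpr hkl)
    have hne : -(φ k) ≠ -(φ l) := fun h => hPQ (by rw [neg_inj.mp h, sub_self])
    have hN := sg_neg (-(φ k)) (φ l) hNP hQ hne
    rw [neg_neg] at hN
    rw [hG' k l, hG' l k, hN, sg_comm (-(φ k)) (φ l) hNP hQ]
    ring

end EllipticPeriods
end
end
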